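/- arXiv:2504.16495 — 8 statements merged into one kernel-verified Lean document; each statement's English description precedes it below -/
import Mathlib

section
/- Let (A, ·) be a perm algebra and (V, l, r) a representation of (A, ·). Then (V*, l*, l* − r*) is a representation of (A, ·), where l*(a) and r*(a) denote the dual maps of l(a) and r(a) acting on V*. -/
open TensorProduct

section
variable {K : Type*} [Field K] {A : Type*} [AddCommGroup A] [Module K A]

/-- perm identity for a plain binary operation -/
def IsPermFn {X : Type*} (mu : X → X → X) : Prop :=
  ∀ a b c : X, mu a (mu b c) = mu (mu a b) c ∧ mu (mu a b) c = mu (mu b a) c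

/-- perm algebra: bundled bilinear multiplication satisfying the perm identities -/
def IsPermMul (m : A →ₗ[K] A →ₗ[K] A) : Prop :=
  ∀ a b c : A, m a (m b c) = m (m a b) c ∧ m (m a b) c = m (m b a) c

/-- The map `T_r : A* → A` associated with a 2-tensor `r ∈ A ⊗ A`,
`T_r(a*) = Σ ⟨a*, a_i⟩ b_i` for `r = Σ a_i ⊗ b_i`. -/
noncomputable def Tten (r : A ⊗[K] A) : Module.Dual K A →ₗ[K] A :=
  TensorProduct.lift (LinearMap.mk₂ K
    (fun a b => (Module.Dual.eval K A a).smulRight b)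
    (by intro a a' b; ext f; simp [add_smul])
    (by intro c a b; ext f; simp [mul_smul])
    (by intro a b b'; ext f; simp [smul_add])
    (by intro c a b; ext f; simp [smul_comm c])) r

noncomputable def mulT (m : A →ₗ[K] A →ₗ[K] A) : A ⊗[K] A →ₗ[K] A := TensorProduct.lift m

noncomputable def p13_23 (m : A →ₗ[K] A →ₗ[K] A) :
    (A ⊗[K] A) ⊗[K] (A ⊗[K] A) →ₗ[K] (A ⊗[K] A) ⊗[K] A :=
  (TensorProduct.map LinearMap.id (mulT m)) ∘ₗ
    (TensorProduct.tensorTensorTensorComm K A A A A).toLinearMap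

noncomputable def p12_13 (m : A →ₗ[K] A →ₗ[K] A) :
    (A ⊗[K] A) ⊗[K] (A ⊗[K] A) →ₗ[K] (A ⊗[K] A) ⊗[K] A :=
  (TensorProduct.assoc K A A A).symm.toLinearMap ∘ₗ
    (TensorProduct.map (mulT m) LinearMap.id) ∘ₗ
    (TensorProduct.tensorTensorTensorComm K A A A A).toLinearMap

noncomputable def p13_12 (m : A →ₗ[K] A →ₗ[K] A) :
    (A ⊗[K] A) ⊗[K] (A ⊗[K] A) →ₗ[K] (A ⊗[K] A) ⊗[K] A :=
  (TensorProduct.assoc K A A A).symm.toLinearMap ∘ₗ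
    (TensorProduct.map (mulT m) (TensorProduct.comm K A A).toLinearMap) ∘ₗ
    (TensorProduct.tensorTensorTensorComm K A A A A).toLinearMap

noncomputable def p12_23 (m : A →ₗ[K] A →ₗ[K] A) :
    (A ⊗[K] A) ⊗[K] (A ⊗[K] A) →ₗ[K] (A ⊗[K] A) ⊗[K] A :=
  (TensorProduct.assoc K A A A).symm.toLinearMap ∘ₗ
    (TensorProduct.leftComm K A A A).toLinearMap ∘ₗ
    (TensorProduct.map (mulT m) LinearMap.id) ∘ₗ
    (TensorProduct.tensorTensorTensorComm K A A A A).toLinearMap ∘ₗ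
    (TensorProduct.map (TensorProduct.comm K A A).toLinearMap LinearMap.id)

/-- `[[r,r]] = r₁₂·r₂₃ − r₁₃·r₂₃ + r₁₂·r₁₃ − r₁₃·r₁₂` -/
noncomputable def ybrac (m : A →ₗ[K] A →ₗ[K] A) (r : A ⊗[K] A) : (A ⊗[K] A) ⊗[K] A :=
  p12_23 m (r ⊗ₜ r) - p13_23 m (r ⊗ₜ r) + p12_13 m (r ⊗ₜ r) - p13_12 m (r ⊗ₜ r)

/-- the perm Yang-Baxter equation -/
noncomputable def IsPYBESol (m : A →ₗ[K] A →ₗ[K] A) (r : A ⊗[K] A) : Prop := ybrac m r = 0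

/-- `(id ⊗ R(a) − ad(a) ⊗ id)(s) = 0` for all `a`. -/
def RadInv (m : A →ₗ[K] A →ₗ[K] A) (s : A ⊗[K] A) : Prop :=
  ∀ a : A, TensorProduct.map LinearMap.id (m.flip a) s
    = TensorProduct.map (m a - m.flip a) LinearMap.id s

variable {V : Type*} [AddCommGroup V] [Module K V]

/-- representation of a perm algebra -/
def IsPermRep (m : A →ₗ[K] A →ₗ[K] A) (l rr : A →ₗ[K] V →ₗ[K] V) : Prop :=
  ∀ a b : A, l (m a b) = l a ∘ₗ l b ∧ l a ∘ₗ l b = l b ∘ₗ l a ∧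
    rr (m a b) = rr b ∘ₗ rr a ∧ rr b ∘ₗ rr a = rr b ∘ₗ l a ∧ rr b ∘ₗ l a = l a ∘ₗ rr b

/-- A-perm algebra -/
def IsAPermAlg (m : A →ₗ[K] A →ₗ[K] A) (l rr : A →ₗ[K] V →ₗ[K] V)
    (mV : V →ₗ[K] V →ₗ[K] V) : Prop :=
  IsPermRep m l rr ∧ IsPermMul mV ∧
  (∀ (a : A) (u w : V), rr a (mV u w) = rr a (mV w u) ∧ rr a (mV u w) = mV u (rr a w)) ∧
  (∀ (a : A) (u w : V), mV (l a u) w = mV (rr a u) w ∧ mV (l a u) w = l a (mV u w) ∧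
    l a (mV u w) = mV u (l a w))


theorem stmt1 {V : Type*} [AddCommGroup V] [Module K V] [FiniteDimensional K A]
    [FiniteDimensional K V]
    (m : A →ₗ[K] A →ₗ[K] A) (hm : IsPermMul m)
    (l rr : A →ₗ[K] V →ₗ[K] V) (h : IsPermRep m l rr) :
    IsPermRep m (Module.Dual.transpose (R := K) ∘ₗ l)
      (@HSub.hSub _ _ _
        (@instHSub _ (LinearMap.addCommGroup (N₂ := (V →ₗ[K] K) →ₗ[K] (V →ₗ[K] K))).toSub)
        (Module.Dual.transpose (R := K) ∘ₗ l : A →ₗ[K] (V →ₗ[K] K) →ₗ[K] (V →ₗ[K] K))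
        (Module.Dual.transpose (R := K) ∘ₗ rr : A →ₗ[K] (V →ₗ[K] K) →ₗ[K] (V →ₗ[K] K))) := by
  intro a b
  have h1 : ∀ v : V, l (m a b) v = l a (l b v) := fun v => LinearMap.congr_fun ((h a b).1) v
  have h2 : ∀ v : V, l a (l b v) = l b (l a v) := fun v => LinearMap.congr_fun ((h a b).2.1) v
  have h3 : ∀ v : V, rr (m a b) v = rr b (rr a v) := fun v => LinearMap.congr_fun ((h a b).2.2.1) v
  have h4 : ∀ v : V, rr b (rr a v) = rr b (l a v) := fun v => LinearMap.congr_fun ((h a b).2.2.2.1) v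
  have h5 : ∀ v : V, rr b (l a v) = l a (rr b v) := fun v => LinearMap.congr_fun ((h a b).2.2.2.2) v
  have h3' : ∀ v : V, rr (m b a) v = rr a (rr b v) := fun v => LinearMap.congr_fun ((h b a).2.2.1) v
  have h4' : ∀ v : V, rr a (rr b v) = rr a (l b v) := fun v => LinearMap.congr_fun ((h b a).2.2.2.1) v
  have h5' : ∀ v : V, rr a (l b v) = l b (rr a v) := fun v => LinearMap.congr_fun ((h b a).2.2.2.2) v
  have hs : ∀ x : A, (@HSub.hSub _ _ _
      (@instHSub _ (LinearMap.addCommGroup (N₂ := (V →ₗ[K] K) →ₗ[K] (V →ₗ[K] K))).toSub)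
      (Module.Dual.transpose (R := K) ∘ₗ l : A →ₗ[K] (V →ₗ[K] K) →ₗ[K] (V →ₗ[K] K))
      (Module.Dual.transpose (R := K) ∘ₗ rr : A →ₗ[K] (V →ₗ[K] K) →ₗ[K] (V →ₗ[K] K))) x
      = Module.Dual.transpose (R := K) (l x) - Module.Dual.transpose (R := K) (rr x) :=
    fun x => rfl
  refine ⟨?_, ?_, ?_, ?_, ?_⟩ <;>
    · ext φ v
      simp only [LinearMap.comp_apply, LinearMap.sub_apply, Module.Dual.transpose_apply,
        map_sub, hs]
      simp only [h1, h2, h3, h4, h5, h3', h4', h5']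
      try ring


end
end

section
/- Let (A, ·_A) and (V, ·_V) be perm algebras and l, r: A → End(V) linear maps. Then (V, l, r, ·_V) is an A-perm algebra if and only if A ⊕ V with multiplication (a+u)·(b+v) = a·_A b + l(a)v + r(b)u + u·_V v is a perm algebra. -/
open TensorProduct

section
variable {K : Type*} [Field K] {A : Type*} [AddCommGroup A] [Module K A]

variable {V : Type*} [AddCommGroup V] [Module K V]

theorem stmt3 {V : Type*} [AddCommGroup V] [Module K V]
    (m : A →ₗ[K] A →ₗ[K] A) (mV : V →ₗ[K] V →ₗ[K] V)
    (hm : IsPermMul m) (hV : IsPermMul mV)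
    (l rr : A →ₗ[K] V →ₗ[K] V) :
    IsAPermAlg m l rr mV ↔
      IsPermFn (fun p q : A × V =>
        (m p.1 q.1, l p.1 q.2 + rr q.1 p.2 + mV p.2 q.2)) := by
  constructor
  · rintro ⟨hrep, hmul, h3, h4⟩
    have Hll : ∀ a b w, l (m a b) w = l a (l b w) := fun a b w => by
      simpa using LinearMap.congr_fun (hrep a b).1 w
    have Hllc : ∀ a b w, l a (l b w) = l b (l a w) := fun a b w => by
      simpa using LinearMap.congr_fun (hrep a b).2.1 w
    have Hrr : ∀ a b w, rr (m a b) w = rr b (rr a w) := fun a b w => by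
      simpa using LinearMap.congr_fun (hrep a b).2.2.1 w
    have Hrl : ∀ a b w, rr b (rr a w) = rr b (l a w) := fun a b w => by
      simpa using LinearMap.congr_fun (hrep a b).2.2.2.1 w
    have Hlr : ∀ a b w, rr b (l a w) = l a (rr b w) := fun a b w => by
      simpa using LinearMap.congr_fun (hrep a b).2.2.2.2 w
    rintro ⟨a, u⟩ ⟨b, v⟩ ⟨c, w⟩
    refine ⟨Prod.ext ?_ ?_, Prod.ext ?_ ?_⟩
    · exact (hm a b c).1
    · simp only [map_add, LinearMap.add_apply]
      rw [Hll a b w, show rr c (l a v) = l a (rr c v) from Hlr a c v,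
        show rr c (rr b u) = rr (m b c) u from (Hrr b c u).symm,
        show rr c (mV u v) = mV u (rr c v) from (h3 c u v).2,
        show mV (l a v) w = l a (mV v w) from (h4 a v w).2.1,
        show mV (rr b u) w = mV u (l b w) from by
          rw [← (h4 b u w).1, (h4 b u w).2.1, (h4 b u w).2.2],
        show mV (mV u v) w = mV u (mV v w) from (hV u v w).1.symm]
      abel
    · exact (hm a b c).2
    · simp only [map_add, LinearMap.add_apply]
      rw [show l (m b a) w = l (m a b) w from by rw [Hll, Hll, Hllc],
        show rr c (l b u) = rr c (rr b u) from (Hrl b c u).symm,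
        show rr c (rr a v) = rr c (l a v) from Hrl a c v,
        show rr c (mV v u) = rr c (mV u v) from ((h3 c u v).1).symm,
        show mV (l b u) w = mV (rr b u) w from (h4 b u w).1,
        show mV (rr a v) w = mV (l a v) w from ((h4 a v w).1).symm,
        show mV (mV v u) w = mV (mV u v) w from ((hV u v w).2).symm]
      abel
  · intro h
    have snd2 : ∀ p q s : A × V,
        (l p.1 (l q.1 s.2 + rr s.1 q.2 + mV q.2 s.2) + rr (m q.1 s.1) p.2
          + mV p.2 (l q.1 s.2 + rr s.1 q.2 + mV q.2 s.2)
          = l (m p.1 q.1) s.2 + rr s.1 (l p.1 q.2 + rr q.1 p.2 + mV p.2 q.2)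
          + mV (l p.1 q.2 + rr q.1 p.2 + mV p.2 q.2) s.2)
        ∧ (l (m p.1 q.1) s.2 + rr s.1 (l p.1 q.2 + rr q.1 p.2 + mV p.2 q.2)
          + mV (l p.1 q.2 + rr q.1 p.2 + mV p.2 q.2) s.2
          = l (m q.1 p.1) s.2 + rr s.1 (l q.1 p.2 + rr p.1 q.2 + mV q.2 p.2)
          + mV (l q.1 p.2 + rr p.1 q.2 + mV q.2 p.2) s.2) := by
      intro p q s
      exact ⟨congrArg Prod.snd (h p q s).1, congrArg Prod.snd (h p q s).2⟩
    have Hll : ∀ a b w, l a (l b w) = l (m a b) w := fun a b w => by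
      simpa using (snd2 (a, 0) (b, 0) (0, w)).1
    have Hllc : ∀ a b w, l (m a b) w = l (m b a) w := fun a b w => by
      simpa using (snd2 (a, 0) (b, 0) (0, w)).2
    have Hrr : ∀ b c u, rr (m b c) u = rr c (rr b u) := fun b c u => by
      simpa using (snd2 (0, u) (b, 0) (c, 0)).1
    have Hrl : ∀ b c u, rr c (rr b u) = rr c (l b u) := fun b c u => by
      simpa using (snd2 (0, u) (b, 0) (c, 0)).2
    have Hlr : ∀ a b u, l a (rr b u) = rr b (l a u) := fun a b u => by
      simpa using (snd2 (a, 0) (0, u) (b, 0)).1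
    have H31 : ∀ a u w, mV u (rr a w) = rr a (mV u w) := fun a u w => by
      simpa using (snd2 (0, u) (0, w) (a, 0)).1
    have H32 : ∀ a u w, rr a (mV u w) = rr a (mV w u) := fun a u w => by
      simpa using (snd2 (0, u) (0, w) (a, 0)).2
    have H41 : ∀ a u w, l a (mV u w) = mV (l a u) w := fun a u w => by
      simpa using (snd2 (a, 0) (0, u) (0, w)).1
    have H42 : ∀ a u w, mV (l a u) w = mV (rr a u) w := fun a u w => by
      simpa using (snd2 (a, 0) (0, u) (0, w)).2
    have H43 : ∀ a u w, mV u (l a w) = mV (rr a u) w := fun a u w => by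
      simpa using (snd2 (0, u) (a, 0) (0, w)).1
    refine ⟨fun a b => ⟨?_, ?_, ?_, ?_, ?_⟩, hV,
      fun a u w => ⟨H32 a u w, (H31 a u w).symm⟩,
      fun a u w => ⟨H42 a u w, (H41 a u w).symm, by
        rw [H43 a u w, ← H42 a u w, ← H41 a u w]⟩⟩
    · exact LinearMap.ext fun w => by simpa using (Hll a b w).symm
    · exact LinearMap.ext fun w => by
        simp only [LinearMap.comp_apply]
        rw [Hll a b w, Hllc a b w, ← Hll b a w]
    · exact LinearMap.ext fun u => by simpa using Hrr a b u
    · exact LinearMap.ext fun u => by simpa using Hrl a b u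
    · exact LinearMap.ext fun u => by simpa using (Hlr a b u).symm

end
end

section
/- Let (A, ·) be a perm algebra and r ∈ A ⊗ A an element whose skew-symmetric part r − σ(r) satisfies (id ⊗ R(a) − ad(a) ⊗ id)(r − σ(r)) = 0 for all a ∈ A. Then r is a solution of the perm Yang-Baxter equation if and only if σ(r) is a solution of the perm Yang-Baxter equation. -/
open TensorProduct

section
variable {K : Type*} [Field K] {A : Type*} [AddCommGroup A] [Module K A]

variable {V : Type*} [AddCommGroup V] [Module K V]

namespace PYBEAux

variable {K : Type*} [Field K] {A : Type*} [AddCommGroup A] [Module K A]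

noncomputable def sigA : A ⊗[K] A →ₗ[K] A ⊗[K] A := (TensorProduct.comm K A A).toLinearMap

noncomputable def YbMap (m : A →ₗ[K] A →ₗ[K] A) :
    (A ⊗[K] A) ⊗[K] (A ⊗[K] A) →ₗ[K] (A ⊗[K] A) ⊗[K] A :=
  p12_23 m - p13_23 m + p12_13 m - p13_12 m

noncomputable def PermT : (A ⊗[K] A) ⊗[K] A →ₗ[K] (A ⊗[K] A) ⊗[K] A :=
  (TensorProduct.assoc K A A A).symm.toLinearMap ∘ₗ
    (TensorProduct.map LinearMap.id sigA) ∘ₗ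
    (TensorProduct.comm K (A ⊗[K] A) A).toLinearMap

noncomputable def PermC : (A ⊗[K] A) ⊗[K] A →ₗ[K] (A ⊗[K] A) ⊗[K] A :=
  (TensorProduct.assoc K A A A).symm.toLinearMap ∘ₗ
    (TensorProduct.comm K (A ⊗[K] A) A).toLinearMap

noncomputable def E1 (m : A →ₗ[K] A →ₗ[K] A) : (A ⊗[K] A) ⊗[K] A →ₗ[K] A ⊗[K] A :=
  (TensorProduct.map LinearMap.id (mulT m)) ∘ₗ (TensorProduct.assoc K A A A).toLinearMap

noncomputable def E2 (m : A →ₗ[K] A →ₗ[K] A) : (A ⊗[K] A) ⊗[K] A →ₗ[K] A ⊗[K] A :=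
  sigA ∘ₗ E1 m ∘ₗ (TensorProduct.map sigA LinearMap.id)

noncomputable def Dm (m : A →ₗ[K] A →ₗ[K] A) : (A ⊗[K] A) ⊗[K] A →ₗ[K] A ⊗[K] A :=
  (LinearMap.id - sigA) ∘ₗ (E1 m + E2 m)

noncomputable def Gw (m : A →ₗ[K] A →ₗ[K] A) :
    (A ⊗[K] A) ⊗[K] (A ⊗[K] A) →ₗ[K] (A ⊗[K] A) ⊗[K] A :=
  (TensorProduct.assoc K A A A).symm.toLinearMap ∘ₗ
    (TensorProduct.map LinearMap.id (Dm m ∘ₗ (TensorProduct.comm K A (A ⊗[K] A)).toLinearMap)) ∘ₗ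
    (TensorProduct.assoc K A A (A ⊗[K] A)).toLinearMap ∘ₗ
    (TensorProduct.map sigA LinearMap.id) ∘ₗ
    (TensorProduct.comm K (A ⊗[K] A) (A ⊗[K] A)).toLinearMap

noncomputable def Phi (m : A →ₗ[K] A →ₗ[K] A) : A →ₗ[K] (A ⊗[K] A) →ₗ[K] A ⊗[K] A :=
  (TensorProduct.mapBilinear (RingHom.id K) A A A A LinearMap.id) ∘ₗ m.flip
    - ((TensorProduct.mapBilinear (RingHom.id K) A A A A).flip LinearMap.id) ∘ₗ (m - m.flip)

noncomputable def LiftMap (m : A →ₗ[K] A →ₗ[K] A) :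
    (A ⊗[K] A) ⊗[K] (A ⊗[K] A) →ₗ[K] (A ⊗[K] A) ⊗[K] A :=
  (TensorProduct.assoc K A A A).symm.toLinearMap ∘ₗ
    (TensorProduct.map LinearMap.id (TensorProduct.lift (Phi m))) ∘ₗ
    (TensorProduct.assoc K A A (A ⊗[K] A)).toLinearMap ∘ₗ
    (TensorProduct.map sigA (LinearMap.id - sigA))

lemma Phi_apply (m : A →ₗ[K] A →ₗ[K] A) (a : A) (s : A ⊗[K] A) :
    Phi m a s = TensorProduct.map LinearMap.id (m.flip a) s
      - TensorProduct.map (m a - m.flip a) LinearMap.id s := by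
  have : TensorProduct.map (m a - m.flip a) (LinearMap.id : A →ₗ[K] A)
      = TensorProduct.map (m a) LinearMap.id - TensorProduct.map (m.flip a) LinearMap.id := by
    apply TensorProduct.ext'
    intro x y
    simp [TensorProduct.sub_tmul]
  simp [Phi, this]

lemma master (m : A →ₗ[K] A →ₗ[K] A) :
    YbMap m ∘ₗ (TensorProduct.map (sigA : A ⊗[K] A →ₗ[K] A ⊗[K] A) sigA)
      + PermC ∘ₗ YbMap m + Gw m ∘ₗ (TensorProduct.comm K (A ⊗[K] A) (A ⊗[K] A)).toLinearMap
    = PermT ∘ₗ YbMap m + LiftMap m + Gw m := by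
  apply TensorProduct.ext_fourfold'
  intro x1 x2 y1 y2
  simp [YbMap, PermT, PermC, Gw, LiftMap, Phi, Dm, E1, E2, sigA,
    p12_23, p13_23, p12_13, p13_12, mulT,
    TensorProduct.sub_tmul, TensorProduct.tmul_sub, TensorProduct.add_tmul,
    TensorProduct.tmul_add]
  abel

lemma assoc_tensor_fixed (s : A ⊗[K] A) (t : A ⊗[K] A) :
    (TensorProduct.assoc K A A (A ⊗[K] A)) (t ⊗ₜ[K] s)
      = TensorProduct.map LinearMap.id ((TensorProduct.mk K A (A ⊗[K] A)).flip s) t := by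
  induction t using TensorProduct.induction_on with
  | zero => simp
  | tmul u v => simp [TensorProduct.assoc_tmul]
  | add u v hu hv => simp [TensorProduct.add_tmul, hu, hv]

lemma liftmap_zero (m : A →ₗ[K] A →ₗ[K] A) (r : A ⊗[K] A)
    (hinv : RadInv m (r - (TensorProduct.comm K A A) r)) :
    LiftMap m (r ⊗ₜ[K] r) = 0 := by
  set s : A ⊗[K] A := r - (TensorProduct.comm K A A) r with hs
  have hzero : TensorProduct.lift (Phi m) ∘ₗ (TensorProduct.mk K A (A ⊗[K] A)).flip s = 0 := by
    ext a
    have h := hinv a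
    simp [Phi_apply, h]
  have h1 : (TensorProduct.map sigA (LinearMap.id - sigA)) (r ⊗ₜ[K] r)
      = (sigA r) ⊗ₜ[K] s := by
    simp [TensorProduct.map_tmul, sigA, hs, TensorProduct.tmul_sub]
  rw [LiftMap]
  simp only [LinearMap.coe_comp, Function.comp_apply, h1, LinearEquiv.coe_coe]
  rw [assoc_tensor_fixed]
  rw [← LinearMap.comp_apply, ← TensorProduct.map_comp, hzero, LinearMap.id_comp,
    TensorProduct.map_zero_right]
  simp

lemma sig_sig (r : A ⊗[K] A) :
    (TensorProduct.comm K A A) ((TensorProduct.comm K A A) r) = r := by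
  have h : (TensorProduct.comm K A A).toLinearMap ∘ₗ (TensorProduct.comm K A A).toLinearMap
      = (LinearMap.id : A ⊗[K] A →ₗ[K] A ⊗[K] A) := by
    apply TensorProduct.ext'
    intro x y
    simp
  simpa using LinearMap.congr_fun h r

lemma ybrac_eq (m : A →ₗ[K] A →ₗ[K] A) (t : A ⊗[K] A) :
    ybrac m t = YbMap m (t ⊗ₜ[K] t) := by
  simp [ybrac, YbMap, LinearMap.sub_apply, LinearMap.add_apply]

lemma fwd (m : A →ₗ[K] A →ₗ[K] A) (r : A ⊗[K] A)
    (hinv : RadInv m (r - (TensorProduct.comm K A A) r))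
    (h : IsPYBESol m r) : IsPYBESol m ((TensorProduct.comm K A A) r) := by
  have hM := LinearMap.congr_fun (master m) (r ⊗ₜ[K] r)
  simp only [LinearMap.add_apply, LinearMap.coe_comp, Function.comp_apply,
    LinearEquiv.coe_coe, TensorProduct.comm_tmul, TensorProduct.map_tmul] at hM
  have hsig : (sigA (K := K) r) = (TensorProduct.comm K A A) r := rfl
  rw [liftmap_zero m r hinv] at hM
  have hyb : YbMap m ((sigA (K := K) r) ⊗ₜ[K] (sigA (K := K) r))
      = ybrac m ((TensorProduct.comm K A A) r) := by
    rw [ybrac_eq, hsig]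
  rw [hyb, ← ybrac_eq] at hM
  unfold IsPYBESol at h ⊢
  rw [h] at hM
  simpa using hM

end PYBEAux


theorem stmt4 (m : A →ₗ[K] A →ₗ[K] A) (hm : IsPermMul m) (r : A ⊗[K] A)
    (hinv : RadInv m (r - (TensorProduct.comm K A A) r)) :
    IsPYBESol m r ↔ IsPYBESol m ((TensorProduct.comm K A A) r) := by
  constructor
  · exact PYBEAux.fwd m r hinv
  · intro h
    have hinv' : RadInv m ((TensorProduct.comm K A A) r
        - (TensorProduct.comm K A A) ((TensorProduct.comm K A A) r)) := by
      intro a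
      have h1 := hinv a
      rw [PYBEAux.sig_sig]
      have : (TensorProduct.comm K A A) r - r = -(r - (TensorProduct.comm K A A) r) := by abel
      rw [this, map_neg, map_neg, h1]
    have := PYBEAux.fwd m ((TensorProduct.comm K A A) r) hinv' h
    rwa [PYBEAux.sig_sig] at this

end
end

section
/- Let (A, ·) be a perm algebra and r ∈ A ⊗ A, with Tᵣ: A* → A the linear map defined by ⟨Tᵣ(a*), b*⟩ = ⟨r, a* ⊗ b*⟩. Then r is a solution of the perm Yang-Baxter equation in (A, ·) if and only if Tᵣ(a*) · Tᵣ(b*) = Tᵣ(L*(Tᵣ(a*))b* + ad*(T_{σ(r)}(b*))a*) for all a*, b* ∈ A*. -/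
open TensorProduct

section
variable {K : Type*} [Field K] {A : Type*} [AddCommGroup A] [Module K A]

variable {V : Type*} [AddCommGroup V] [Module K V]

noncomputable def contrL (f : Module.Dual K A) : A ⊗[K] A →ₗ[K] A :=
  (TensorProduct.lid K A).toLinearMap ∘ₗ TensorProduct.map f LinearMap.id

@[simp] lemma contrL_tmul (f : Module.Dual K A) (a b : A) :
    contrL f (a ⊗ₜ[K] b) = f a • b := by simp [contrL]

noncomputable def Psi (x : (A ⊗[K] A) ⊗[K] A) (f g : Module.Dual K A) : A :=
  contrL g (TensorProduct.map (contrL f) LinearMap.id x)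

@[simp] lemma Psi_add (x y : (A ⊗[K] A) ⊗[K] A) (f g : Module.Dual K A) :
    Psi (x + y) f g = Psi x f g + Psi y f g := by simp [Psi]

@[simp] lemma Psi_sub (x y : (A ⊗[K] A) ⊗[K] A) (f g : Module.Dual K A) :
    Psi (x - y) f g = Psi x f g - Psi y f g := by simp [Psi]

@[simp] lemma Psi_zero' (f g : Module.Dual K A) : Psi (0 : (A ⊗[K] A) ⊗[K] A) f g = 0 := by
  simp [Psi]

@[simp] lemma Psi_tmul (u v w : A) (f g : Module.Dual K A) :
    Psi ((u ⊗ₜ[K] v) ⊗ₜ[K] w) f g = (f u * g v) • w := by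
  simp [Psi, smul_smul]

lemma psi_repr {ι : Type*} (b : Module.Basis ι K A) (x : (A ⊗[K] A) ⊗[K] A) (i j k : ι) :
    b.repr (Psi x (b.coord i) (b.coord j)) k
      = (((b.tensorProduct b).tensorProduct b).repr x) ((i, j), k) := by
  induction x using TensorProduct.induction_on with
  | zero => simp
  | tmul y w =>
    induction y using TensorProduct.induction_on with
    | zero => simp
    | tmul u v =>
      simp [Module.Basis.tensorProduct_repr_tmul_apply, Module.Basis.coord_apply, mul_assoc, mul_comm,
        mul_left_comm]
    | add y₁ y₂ h₁ h₂ => simp [add_tmul] at h₁ h₂ ⊢; rw [h₁, h₂]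
  | add x₁ x₂ h₁ h₂ => simp [h₁, h₂]

lemma psi_eq_zero (x : (A ⊗[K] A) ⊗[K] A)
    (h : ∀ f g : Module.Dual K A, Psi x f g = 0) : x = 0 := by
  set b := Module.Basis.ofVectorSpace K A
  apply ((b.tensorProduct b).tensorProduct b).repr.map_eq_zero_iff.mp
  ext p
  obtain ⟨⟨i, j⟩, k⟩ := p
  rw [← psi_repr b x i j k, h]
  simp

@[simp] lemma contrL_f_add (f₁ f₂ : Module.Dual K A) (s : A ⊗[K] A) :
    contrL (f₁ + f₂) s = contrL f₁ s + contrL f₂ s := by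
  induction s using TensorProduct.induction_on with
  | zero => simp
  | tmul a b => simp [add_smul]
  | add x y hx hy => simp only [map_add, hx, hy]; abel

@[simp] lemma contrL_f_sub (f₁ f₂ : Module.Dual K A) (s : A ⊗[K] A) :
    contrL (f₁ - f₂) s = contrL f₁ s - contrL f₂ s := by
  induction s using TensorProduct.induction_on with
  | zero => simp
  | tmul a b => simp [sub_smul]
  | add x y hx hy => simp only [map_add, hx, hy]; abel

@[simp] lemma contrL_f_zero (s : A ⊗[K] A) : contrL (0 : Module.Dual K A) s = 0 := by
  induction s using TensorProduct.induction_on with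
  | zero => simp
  | tmul a b => simp
  | add x y hx hy => simp [hx, hy]

@[simp] lemma dualMap_zero_apply (g : Module.Dual K A) :
    (LinearMap.dualMap (0 : A →ₗ[K] A)) g = 0 := by ext a; simp

@[simp] lemma dualMap_add_apply (φ ψ : A →ₗ[K] A) (g : Module.Dual K A) :
    (φ + ψ).dualMap g = φ.dualMap g + ψ.dualMap g := by ext a; simp

@[simp] lemma dualMap_sub_apply (φ ψ : A →ₗ[K] A) (g : Module.Dual K A) :
    (φ - ψ).dualMap g = φ.dualMap g - ψ.dualMap g := by ext a; simp

lemma Tten_eq (r : A ⊗[K] A) (f : Module.Dual K A) : Tten r f = contrL f r := by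
  induction r using TensorProduct.induction_on with
  | zero => simp [Tten]
  | tmul a b => simp [Tten]
  | add x y hx hy => simp only [Tten, map_add, LinearMap.add_apply] at hx hy ⊢; rw [hx, hy]

lemma psi_p12_23 (m : A →ₗ[K] A →ₗ[K] A) (r s : A ⊗[K] A) (f g : Module.Dual K A) :
    Psi (p12_23 m (r ⊗ₜ s)) f g = contrL ((m (contrL f r)).dualMap g) s := by
  induction r using TensorProduct.induction_on with
  | zero => simp [zero_tmul]
  | tmul a b =>
    induction s using TensorProduct.induction_on with
    | zero => simp
    | tmul c d =>
      simp [p12_23, mulT, tensorTensorTensorComm_tmul, leftComm_tmul, mul_comm, smul_smul]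
    | add s₁ s₂ h₁ h₂ => simp only [tmul_add, map_add, Psi_add, h₁, h₂]
  | add r₁ r₂ h₁ h₂ => simp [add_tmul, h₁, h₂, map_add]

lemma psi_p13_23 (m : A →ₗ[K] A →ₗ[K] A) (r s : A ⊗[K] A) (f g : Module.Dual K A) :
    Psi (p13_23 m (r ⊗ₜ s)) f g = m (contrL f r) (contrL g s) := by
  induction r using TensorProduct.induction_on with
  | zero => simp [zero_tmul]
  | tmul a b =>
    induction s using TensorProduct.induction_on with
    | zero => simp
    | tmul c d => simp [p13_23, mulT, tensorTensorTensorComm_tmul, smul_smul, mul_comm]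
    | add s₁ s₂ h₁ h₂ => simp [tmul_add, h₁, h₂]
  | add r₁ r₂ h₁ h₂ => simp [add_tmul, h₁, h₂, map_add]

lemma psi_p12_13 (m : A →ₗ[K] A →ₗ[K] A) (r s : A ⊗[K] A) (f g : Module.Dual K A) :
    Psi (p12_13 m (r ⊗ₜ s)) f g
      = contrL ((m (contrL g ((TensorProduct.comm K A A) r))).dualMap f) s := by
  induction r using TensorProduct.induction_on with
  | zero => simp [zero_tmul]
  | tmul a b =>
    induction s using TensorProduct.induction_on with
    | zero => simp
    | tmul c d =>
      simp [p12_13, mulT, tensorTensorTensorComm_tmul, mul_comm, smul_smul]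
    | add s₁ s₂ h₁ h₂ => simp only [tmul_add, map_add, Psi_add, h₁, h₂]
  | add r₁ r₂ h₁ h₂ => simp [add_tmul, h₁, h₂, map_add]

lemma psi_p13_12 (m : A →ₗ[K] A →ₗ[K] A) (r s : A ⊗[K] A) (f g : Module.Dual K A) :
    Psi (p13_12 m (r ⊗ₜ s)) f g
      = contrL ((m.flip (contrL g ((TensorProduct.comm K A A) s))).dualMap f) r := by
  induction r using TensorProduct.induction_on with
  | zero => simp [zero_tmul]
  | tmul a b =>
    induction s using TensorProduct.induction_on with
    | zero => simp
    | tmul c d =>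
      simp [p13_12, mulT, tensorTensorTensorComm_tmul, mul_comm, smul_smul]
    | add s₁ s₂ h₁ h₂ => simp [tmul_add, h₁, h₂, map_add, add_smul]
  | add r₁ r₂ h₁ h₂ => simp [add_tmul, h₁, h₂, map_add]


theorem stmt5 [FiniteDimensional K A] (m : A →ₗ[K] A →ₗ[K] A) (hm : IsPermMul m)
    (r : A ⊗[K] A) :
    IsPYBESol m r ↔
      ∀ f g : Module.Dual K A,
        m (Tten r f) (Tten r g)
          = Tten r ((m (Tten r f)).dualMap g
              + (m (Tten ((TensorProduct.comm K A A) r) g)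
                 - m.flip (Tten ((TensorProduct.comm K A A) r) g)).dualMap f) := by
  have key : ∀ f g : Module.Dual K A,
      Psi (ybrac m r) f g
        = Tten r ((m (Tten r f)).dualMap g
              + (m (Tten ((TensorProduct.comm K A A) r) g)
                 - m.flip (Tten ((TensorProduct.comm K A A) r) g)).dualMap f)
          - m (Tten r f) (Tten r g) := by
    intro f g
    simp only [ybrac, Psi_sub, Psi_add, psi_p12_23, psi_p13_23, psi_p12_13, psi_p13_12,
      Tten_eq, map_sub, dualMap_sub_apply, contrL_f_add, contrL_f_sub, dualMap_add_apply]
    abel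
  constructor
  · intro h f g
    have h0 := key f g
    rw [show ybrac m r = 0 from h, Psi_zero'] at h0
    have := sub_eq_zero.mp h0.symm
    exact this.symm
  · intro h
    show ybrac m r = 0
    apply psi_eq_zero
    intro f g
    rw [key f g, h f g, sub_self]


end
end

section
/- Let (A, ·) be a perm algebra and r ∈ A ⊗ A. Then r is (R, ad)-invariant if and only if Tᵣ(ad*(a)a*) = Tᵣ(a*)·a for all a ∈ A, a* ∈ A*. -/
open TensorProduct

section
variable {K : Type*} [Field K] {A : Type*} [AddCommGroup A] [Module K A]

variable {V : Type*} [AddCommGroup V] [Module K V]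

lemma Tten_tmul {K : Type*} [Field K] {A : Type*} [AddCommGroup A] [Module K A]
    (x y : A) (f : Module.Dual K A) : Tten (x ⊗ₜ[K] y) f = f x • y := rfl

lemma Tten_add {K : Type*} [Field K] {A : Type*} [AddCommGroup A] [Module K A]
    (s t : A ⊗[K] A) : Tten (s + t) = Tten s + Tten t := by
  unfold Tten; rw [map_add]

lemma Tten_map_right {K : Type*} [Field K] {A : Type*} [AddCommGroup A] [Module K A]
    (g : A →ₗ[K] A) (s : A ⊗[K] A) (f : Module.Dual K A) :
    Tten (TensorProduct.map LinearMap.id g s) f = g (Tten s f) := by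
  induction s using TensorProduct.induction_on with
  | zero => simp [Tten]
  | tmul x y => simp [Tten_tmul]
  | add s t hs ht => simp [map_add, Tten_add, LinearMap.add_apply, hs, ht]

lemma Tten_map_left {K : Type*} [Field K] {A : Type*} [AddCommGroup A] [Module K A]
    (g : A →ₗ[K] A) (s : A ⊗[K] A) (f : Module.Dual K A) :
    Tten (TensorProduct.map g LinearMap.id s) f = Tten s (g.dualMap f) := by
  induction s using TensorProduct.induction_on with
  | zero => simp [Tten]
  | tmul x y => simp [Tten_tmul]
  | add s t hs ht => simp [map_add, Tten_add, LinearMap.add_apply, hs, ht]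

lemma Tten_eq_s7 {K : Type*} [Field K] {A : Type*} [AddCommGroup A] [Module K A]
    (s : A ⊗[K] A) :
    Tten s = dualTensorHom K (Module.Dual K A) A
      (TensorProduct.map (Module.Dual.eval K A) LinearMap.id s) := by
  induction s using TensorProduct.induction_on with
  | zero => simp [Tten]
  | tmul x y => ext f; simp [Tten_tmul]
  | add s t hs ht => simp [map_add, Tten_add, hs, ht]

lemma Tten_inj {K : Type*} [Field K] {A : Type*} [AddCommGroup A] [Module K A]
    [FiniteDimensional K A] {s t : A ⊗[K] A} (h : Tten s = Tten t) : s = t := by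
  have h2 : dualTensorHom K (Module.Dual K A) A
      (TensorProduct.map (Module.Dual.eval K A) LinearMap.id s)
    = dualTensorHom K (Module.Dual K A) A
      (TensorProduct.map (Module.Dual.eval K A) LinearMap.id t) := by
    rw [← Tten_eq_s7, ← Tten_eq_s7, h]
  have hinj1 : Function.Injective (dualTensorHom K (Module.Dual K A) A) := by
    have := (dualTensorHomEquiv K (Module.Dual K A) A).injective
    rwa [show ((dualTensorHomEquiv K (Module.Dual K A) A : _ ≃ₗ[K] _) : _ → _)
      = dualTensorHom K (Module.Dual K A) A from rfl] at this
  have h3 := hinj1 h2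
  have hinj2 : Function.Injective
      (TensorProduct.map (Module.Dual.eval K A) (LinearMap.id : A →ₗ[K] A)) := by
    have heq : TensorProduct.map ((Module.evalEquiv K A : A →ₗ[K] _)) (LinearMap.id : A →ₗ[K] A)
        = (TensorProduct.congr (Module.evalEquiv K A) (LinearEquiv.refl K A)).toLinearMap := rfl
    have h4 := (TensorProduct.congr (Module.evalEquiv K A) (LinearEquiv.refl K A)).injective
    rw [← LinearEquiv.coe_coe, ← heq] at h4
    exact h4
  exact hinj2 h3

theorem stmt7 [FiniteDimensional K A] (m : A →ₗ[K] A →ₗ[K] A) (hm : IsPermMul m)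
    (r : A ⊗[K] A) :
    RadInv m r ↔
      ∀ (a : A) (f : Module.Dual K A),
        Tten r ((m a - m.flip a).dualMap f) = m (Tten r f) a := by
  constructor
  · intro h a f
    have h1 := h a
    have : m (Tten r f) a = m.flip a (Tten r f) := rfl
    rw [this, ← Tten_map_right (m.flip a) r f, h1, Tten_map_left]
  · intro h a
    apply Tten_inj
    ext f
    rw [Tten_map_right, Tten_map_left, h a f]
    rfl

end
end

section
/- Let (A, ·) be a perm algebra and r ∈ A ⊗ A skew-symmetric (σ(r) = −r). Then r is (R, ad)-invariant if and only if Tᵣ(R*(a)a*) = ad(a)Tᵣ(a*) for all a ∈ A, a* ∈ A*, and this is further equivalent to L*(Tᵣ(a*))b* = ad*(Tᵣ(b*))a* for all a*, b* ∈ A*. -/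
open TensorProduct

section
variable {K : Type*} [Field K] {A : Type*} [AddCommGroup A] [Module K A]

variable {V : Type*} [AddCommGroup V] [Module K V]

section
variable {K : Type*} [Field K] {A : Type*} [AddCommGroup A] [Module K A]

lemma Tten_add' (x y : A ⊗[K] A) : Tten (x + y) = Tten x + Tten y := by
  simp [Tten]

lemma Tten_sub' (x y : A ⊗[K] A) : Tten (x - y) = Tten x - Tten y := by
  simp [Tten]

lemma Tten_neg' (x : A ⊗[K] A) : Tten (-x) = - Tten x := by
  simp [Tten]

lemma Tten_zero' : Tten (0 : A ⊗[K] A) = 0 := by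
  simp [Tten]

lemma Tten_tmul' (a b : A) (f : Module.Dual K A) : Tten (a ⊗ₜ[K] b) f = f a • b := by
  simp [Tten]

lemma Tten_map' (φ ψ : A →ₗ[K] A) (s : A ⊗[K] A) (f : Module.Dual K A) :
    Tten (TensorProduct.map φ ψ s) f = ψ (Tten s (φ.dualMap f)) := by
  induction s using TensorProduct.induction_on with
  | zero => simp [Tten_zero']
  | tmul a b => simp [Tten_tmul']
  | add x y hx hy => simp only [map_add, Tten_add', LinearMap.add_apply] at *; rw [hx, hy]

lemma Tten_comm' (s : A ⊗[K] A) (f g : Module.Dual K A) :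
    g (Tten ((TensorProduct.comm K A A) s) f) = f (Tten s g) := by
  induction s using TensorProduct.induction_on with
  | zero => simp [Tten_zero']
  | tmul a b => simp [Tten_tmul', mul_comm]
  | add x y hx hy => simp only [map_add, Tten_add', LinearMap.add_apply] at *; rw [hx, hy]

lemma Tten_skew' {r : A ⊗[K] A} (hskew : (TensorProduct.comm K A A) r = -r)
    (f g : Module.Dual K A) : g (Tten r f) = - f (Tten r g) := by
  have := Tten_comm' r f g
  rw [hskew, Tten_neg'] at this
  simp only [LinearMap.neg_apply, map_neg] at this
  linear_combination -this

lemma Tten_dualDistrib' (s : A ⊗[K] A) (f g : Module.Dual K A) :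
    TensorProduct.dualDistrib K A A (f ⊗ₜ g) s = g (Tten s f) := by
  induction s using TensorProduct.induction_on with
  | zero => simp [Tten_zero']
  | tmul a b => simp [Tten_tmul', mul_comm]
  | add x y hx hy => simp only [map_add, Tten_add', LinearMap.add_apply] at *; rw [hx, hy]

lemma Tten_sep' [FiniteDimensional K A] (s : A ⊗[K] A)
    (h : ∀ f g : Module.Dual K A, g (Tten s f) = 0) : s = 0 := by
  rw [← Module.forall_dual_apply_eq_zero_iff K s]
  intro φ
  obtain ⟨t, rfl⟩ := (TensorProduct.dualDistribEquiv K A A).surjective φ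
  show TensorProduct.dualDistrib K A A t s = 0
  induction t using TensorProduct.induction_on with
  | zero => simp
  | tmul f g => rw [Tten_dualDistrib']; exact h f g
  | add x y hx hy => simp [map_add, hx, hy]

lemma vec_eq_of_dual' [FiniteDimensional K A] {x y : A}
    (h : ∀ g : Module.Dual K A, g x = g y) : x = y := by
  rw [← sub_eq_zero, ← Module.forall_dual_apply_eq_zero_iff K (x - y)]
  intro g; simp [h g]

theorem radInv_iff_pairing [FiniteDimensional K A] (m : A →ₗ[K] A →ₗ[K] A)
    (r : A ⊗[K] A) (hskew : (TensorProduct.comm K A A) r = -r) :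
    RadInv m r ↔
      ∀ (a : A) (f g : Module.Dual K A),
        g (m.flip a (Tten r f)) = - f ((m a - m.flip a) (Tten r g)) := by
  constructor
  · intro h a f g
    have h1 := congrArg (fun s => g (Tten s f)) (h a)
    simp only [Tten_map'] at h1
    rw [LinearMap.dualMap_id] at h1
    simp only [LinearMap.id_coe, id_eq] at h1
    rw [h1, Tten_skew' hskew]
    simp [LinearMap.dualMap_apply]
  · intro h a
    rw [← sub_eq_zero]
    apply Tten_sep'
    intro f g
    have e1 : g (Tten (TensorProduct.map LinearMap.id (m.flip a) r) f)
        = g (m.flip a (Tten r f)) := by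
      rw [Tten_map', LinearMap.dualMap_id]; rfl
    have e2 : g (Tten (TensorProduct.map (m a - m.flip a) LinearMap.id r) f)
        = - f ((m a - m.flip a) (Tten r g)) := by
      rw [Tten_map']
      simp only [LinearMap.id_coe, id_eq]
      rw [Tten_skew' hskew]
      simp [LinearMap.dualMap_apply]
    rw [Tten_sub', LinearMap.sub_apply, map_sub, e1, e2, h a f g, sub_self]
end

theorem stmt8 [FiniteDimensional K A] (m : A →ₗ[K] A →ₗ[K] A) (hm : IsPermMul m)
    (r : A ⊗[K] A) (hskew : (TensorProduct.comm K A A) r = -r) :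
    (RadInv m r ↔
      ∀ (a : A) (f : Module.Dual K A),
        Tten r ((m.flip a).dualMap f) = (m a - m.flip a) (Tten r f)) ∧
    (RadInv m r ↔
      ∀ f g : Module.Dual K A,
        (m (Tten r f)).dualMap g
          = (m (Tten r g) - m.flip (Tten r g)).dualMap f) := by
  rw [radInv_iff_pairing m r hskew]
  constructor
  · constructor
    · intro h a f
      apply vec_eq_of_dual' (K := K)
      intro g
      rw [Tten_skew' hskew]
      have := h a g f
      simp only [LinearMap.dualMap_apply, LinearMap.sub_apply] at *
      linear_combination -this
    · intro h a f g
      have := h a g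
      rw [← this, Tten_skew' hskew ((m.flip a).dualMap g) f]
      simp [LinearMap.dualMap_apply]
  · constructor
    · intro h f g
      ext a
      have := h a f g
      simp only [LinearMap.dualMap_apply, LinearMap.sub_apply, LinearMap.flip_apply,
        map_sub] at *
      linear_combination this
    · intro h a f g
      have := LinearMap.congr_fun (h f g) a
      simp only [LinearMap.dualMap_apply, LinearMap.sub_apply, LinearMap.flip_apply,
        map_sub] at *
      linear_combination this

end
end

section
/- Let P be a Rota-Baxter operator of weight λ on a perm algebra (A, ·). Then on the semi-direct product perm algebra A ⋉_{L*, ad*} A*, the bilinear form 𝔅_d(a+a*, b+b*) = ⟨a, b*⟩ − ⟨a*, b⟩ together with the operator P − (λ·id + P)* (acting as P on A and as −(λ·id + P)* on A*) makes (A ⋉_{L*,ad*} A*, ·, 𝔅_d, P − (λ id + P)*) a quadratic Rota-Baxter perm algebra of weight λ. -/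
open TensorProduct

section
variable {K : Type*} [Field K] {A : Type*} [AddCommGroup A] [Module K A]

variable {V : Type*} [AddCommGroup V] [Module K V]

/-- Rota-Baxter operator of weight `lam` on a perm algebra. -/
def IsRB (m : A →ₗ[K] A →ₗ[K] A) (lam : K) (P : A →ₗ[K] A) : Prop :=
  ∀ a b : A, m (P a) (P b) = P (m (P a) b + m a (P b) + lam • m a b)

def IsRBFn {X : Type*} [AddCommGroup X] [Module K X]
    (mu : X → X → X) (lam : K) (P : X → X) : Prop :=
  ∀ a b : X, mu (P a) (P b) = P (mu (P a) b + mu a (P b) + lam • mu a b)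

/-- quadratic Rota-Baxter perm algebra of weight `lam` (plain-function version) -/
def IsQuadRBFn {X : Type*} [AddCommGroup X] [Module K X]
    (mu : X → X → X) (B : X → X → K) (P : X → X) (lam : K) : Prop :=
  IsPermFn mu ∧ (∀ x : X, (∀ y : X, B x y = 0) → x = 0) ∧
  (∀ x y : X, B x y = - B y x) ∧
  (∀ x y z : X, B (mu x y) z = B x (mu y z - mu z y)) ∧
  IsRBFn mu lam P ∧ ∀ x y : X, B (P x) y + B x (P y) + lam * B x y = 0

theorem stmt14 [FiniteDimensional K A] (m : A →ₗ[K] A →ₗ[K] A) (hm : IsPermMul m)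
    (P : A →ₗ[K] A) (lam : K) (hP : IsRB m lam P) :
    IsQuadRBFn
      (fun p q : A × Module.Dual K A =>
        (m p.1 q.1, (m p.1).dualMap q.2 + (m q.1 - m.flip q.1).dualMap p.2))
      (fun p q : A × Module.Dual K A => q.2 p.1 - p.2 q.1)
      (fun p : A × Module.Dual K A =>
        (P p.1, -((lam • LinearMap.id + P).dualMap p.2)))
      lam := by
  have hAssoc : ∀ a b c : A, m a (m b c) = m (m a b) c := fun a b c => (hm a b c).1
  have hLC : ∀ a b c : A, m (m a b) c = m (m b a) c := fun a b c => (hm a b c).2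
  refine ⟨?_, ?_, ?_, ?_, ?_, ?_⟩
  · -- perm identities
    rintro ⟨a, f⟩ ⟨b, g⟩ ⟨c, h⟩
    constructor
    · refine Prod.ext (hAssoc a b c) ?_
      ext d
      simp only [LinearMap.add_apply, LinearMap.dualMap_apply, LinearMap.sub_apply,
        LinearMap.flip_apply, map_sub]
      linear_combination congrArg h (hAssoc b a d) - congrArg h (hLC a b d) +
        congrArg g (hAssoc c a d) + congrArg g (hLC c a d) -
        congrArg g (hAssoc a c d) + congrArg g (hAssoc a d c) -
        congrArg f (hAssoc b c d) + congrArg f (hAssoc b d c) -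
        congrArg f (hAssoc d b c) - congrArg f (hLC d b c) + congrArg f (hLC c d b)
    · refine Prod.ext (hLC a b c) ?_
      ext d
      simp only [LinearMap.add_apply, LinearMap.dualMap_apply, LinearMap.sub_apply,
        LinearMap.flip_apply, map_sub]
      linear_combination congrArg h (hLC a b d) - congrArg f (hLC c d b) +
        congrArg g (hLC c d a)
  · -- nondegenerate
    rintro ⟨a, f⟩ hx
    have h1 : a = 0 := by
      rw [← Module.forall_dual_apply_eq_zero_iff K]
      intro φ
      simpa using hx (0, φ)
    have h2 : f = 0 := by
      ext b
      simpa using hx (b, 0)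
    simp [h1, h2, Prod.ext_iff]
  · intro x y; ring
  · -- invariance
    rintro ⟨a, f⟩ ⟨b, g⟩ ⟨c, h⟩
    simp only [LinearMap.add_apply, LinearMap.dualMap_apply, LinearMap.sub_apply,
      LinearMap.flip_apply, map_sub, Prod.fst_sub, Prod.snd_sub, map_add]
    ring
  · -- Rota-Baxter
    rintro ⟨a, f⟩ ⟨b, g⟩
    have hP' : ∀ x y : A, m (P x) (P y)
        = P (m (P x) y) + P (m x (P y)) + lam • P (m x y) := by
      intro x y; simpa [map_add, map_smul] using hP x y
    refine Prod.ext ?_ ?_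
    · simpa [map_add, map_smul] using hP a b
    · ext d
      simp only [LinearMap.add_apply, LinearMap.dualMap_apply, LinearMap.sub_apply,
        LinearMap.flip_apply, LinearMap.neg_apply, LinearMap.smul_apply,
        LinearMap.id_coe, id_eq, Prod.smul_snd, Prod.smul_fst, Prod.fst_add,
        Prod.snd_add, map_add, map_sub, map_smul, smul_eq_mul, Prod.mk_add_mk,
        Prod.smul_mk]
      have hg : ∀ x y : A, g (m (P x) (P y)) = g (P (m (P x) y)) + g (P (m x (P y)))
          + lam * g (P (m x y)) := by
        intro x y; rw [hP' x y]; simp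
      have hf : ∀ x y : A, f (m (P x) (P y)) = f (P (m (P x) y)) + f (P (m x (P y)))
          + lam * f (P (m x y)) := by
        intro x y; rw [hP' x y]; simp
      linear_combination hg a d + hf b d - hf d b
  · -- compatibility
    rintro ⟨a, f⟩ ⟨b, g⟩
    simp only [LinearMap.neg_apply, LinearMap.dualMap_apply, LinearMap.add_apply,
      LinearMap.smul_apply, LinearMap.id_coe, id_eq, map_add, map_smul, smul_eq_mul]
    ring

end
end

section
/- Let (A, ·, Δᵣ) be a quasi-triangular perm bialgebra, i.e., r ∈ A⊗A is a solution of the perm Yang-Baxter equation with (R, ad)-invariant skew-symmetric part, and let ·ᵣ be the multiplication on A* dual to Δᵣ, given by a* ·ᵣ b* = L*(Tᵣ(a*))b* + ad*(T_{σ(r)}(b*))a*. Then both Tᵣ and T_{σ(r)}: A* → A are perm algebra homomorphisms from (A*, ·ᵣ) to (A, ·). -/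
open TensorProduct

section
variable {K : Type*} [Field K] {A : Type*} [AddCommGroup A] [Module K A]

variable {V : Type*} [AddCommGroup V] [Module K V]

noncomputable def lc (f : Module.Dual K A) : A ⊗[K] A →ₗ[K] A :=
  TensorProduct.lift (f.smulRight LinearMap.id)

@[simp] lemma lc_tmul (f : Module.Dual K A) (a b : A) :
    lc f (a ⊗ₜ[K] b) = f a • b := by simp [lc]

lemma ybrac_expand (m : A →ₗ[K] A →ₗ[K] A) (S : Finset (A×A)) :
  ybrac m (∑ p ∈ S, p.1 ⊗ₜ[K] p.2) =
    ((∑ q ∈ S, ∑ p ∈ S, (p.1 ⊗ₜ[K] (m p.2 q.1)) ⊗ₜ[K] q.2)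
      - ∑ q ∈ S, ∑ p ∈ S, (p.1 ⊗ₜ[K] q.1) ⊗ₜ[K] (m p.2 q.2))
      + (∑ q ∈ S, ∑ p ∈ S, ((m p.1 q.1) ⊗ₜ[K] p.2) ⊗ₜ[K] q.2)
      - ∑ q ∈ S, ∑ p ∈ S, ((m p.1 q.1) ⊗ₜ[K] q.2) ⊗ₜ[K] p.2 := by
  simp [ybrac, p12_23, p13_23, p12_13, p13_12, mulT, tmul_sum, sum_tmul,
    Finset.sum_sub_distrib, Finset.sum_add_distrib]

lemma Tten_expand {ι : Type*} (S : Finset ι) (u v : ι → A) (f : Module.Dual K A) :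
    Tten (∑ p ∈ S, u p ⊗ₜ[K] v p) f = ∑ p ∈ S, f (u p) • v p := by
  simp [Tten, LinearMap.sum_apply]

set_option maxHeartbeats 2000000 in
theorem stmt19 [FiniteDimensional K A] (m : A →ₗ[K] A →ₗ[K] A) (hm : IsPermMul m)
    (r : A ⊗[K] A) (hr : IsPYBESol m r)
    (hinv : RadInv m (r - (TensorProduct.comm K A A) r)) :
    ∀ f g : Module.Dual K A,
      (Tten r ((m (Tten r f)).dualMap g
          + (m (Tten ((TensorProduct.comm K A A) r) g)
             - m.flip (Tten ((TensorProduct.comm K A A) r) g)).dualMap f)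
        = m (Tten r f) (Tten r g)) ∧
      (Tten ((TensorProduct.comm K A A) r) ((m (Tten r f)).dualMap g
          + (m (Tten ((TensorProduct.comm K A A) r) g)
             - m.flip (Tten ((TensorProduct.comm K A A) r) g)).dualMap f)
        = m (Tten ((TensorProduct.comm K A A) r) f)
            (Tten ((TensorProduct.comm K A A) r) g)) := by
  intro f g
  obtain ⟨S, hS⟩ := TensorProduct.exists_finset r
  have hσ : (TensorProduct.comm K A A) r = ∑ p ∈ S, p.2 ⊗ₜ[K] p.1 := by rw [hS]; simp
  constructor
  · have H1 : (lc g) (TensorProduct.map (lc f) LinearMap.id (ybrac m r)) = 0 := by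
      rw [hr]; simp
    rw [hS, ybrac_expand] at H1
    simp only [map_sum, TensorProduct.map_tmul, LinearMap.id_coe, id_eq, lc_tmul,
      map_sub, map_add, map_smul, TensorProduct.smul_tmul', smul_eq_mul,
      Finset.sum_sub_distrib, Finset.sum_add_distrib] at H1
    rw [hσ, hS]
    simp only [Tten_expand, LinearMap.add_apply, LinearMap.sub_apply, LinearMap.dualMap_apply,
      map_sum, map_smul, LinearMap.sum_apply, LinearMap.smul_apply, smul_eq_mul,
      LinearMap.flip_apply, map_sub, mul_sub, sub_smul, add_smul, smul_smul,
      Finset.smul_sum, Finset.sum_add_distrib, Finset.sum_sub_distrib, Finset.sum_smul]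
    nth_rewrite 4 [Finset.sum_comm] at H1
    simp only [mul_comm] at H1 ⊢
    rw [← sub_eq_zero, ← H1]
    abel
  · have H2 : (lc g) ((TensorProduct.comm K A A)
        (TensorProduct.map (lc f) LinearMap.id (ybrac m r))) = 0 := by
      rw [hr]; simp
    rw [hS, ybrac_expand] at H2
    simp only [map_sum, TensorProduct.map_tmul, LinearMap.id_coe, id_eq, lc_tmul,
      TensorProduct.comm_tmul, map_sub, map_add, map_smul, TensorProduct.smul_tmul',
      TensorProduct.tmul_smul, smul_eq_mul,
      Finset.sum_sub_distrib, Finset.sum_add_distrib] at H2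
    have H3 := congrArg (lc f) (hinv (Tten ((TensorProduct.comm K A A) r) g))
    rw [hσ, hS] at H3
    simp only [Tten_expand, map_sub, map_add, map_sum, map_smul, TensorProduct.map_tmul,
      LinearMap.id_coe, id_eq, lc_tmul, LinearMap.flip_apply, LinearMap.sum_apply,
      LinearMap.smul_apply, LinearMap.sub_apply, smul_eq_mul, TensorProduct.smul_tmul',
      TensorProduct.tmul_smul, smul_smul, mul_sub, sub_smul, add_smul, smul_sub,
      Finset.smul_sum, Finset.sum_sub_distrib, Finset.sum_add_distrib, Finset.sum_smul] at H3
    rw [hσ, hS]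
    simp only [Tten_expand, LinearMap.add_apply, LinearMap.sub_apply, LinearMap.dualMap_apply,
      map_sum, map_smul, LinearMap.sum_apply, LinearMap.smul_apply, smul_eq_mul,
      LinearMap.flip_apply, map_sub, mul_sub, sub_smul, add_smul, smul_smul,
      Finset.smul_sum, Finset.sum_add_distrib, Finset.sum_sub_distrib, Finset.sum_smul]
    nth_rewrite 1 [Finset.sum_comm] at H3
    nth_rewrite 2 [Finset.sum_comm] at H3
    nth_rewrite 4 [Finset.sum_comm] at H3
    simp only [mul_comm] at H2 H3 ⊢
    rw [← sub_eq_zero] at H3 ⊢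
    have Hsum := congrArg₂ (· - ·) H3 H2
    simp only [sub_zero] at Hsum
    rw [← Hsum]
    abel

end
end
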